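/- Let m > 0, a > 0, and C be real numbers, and let I = {η ∈ ℝ : exp(−2mη + C) > a/2}. Define φ : I → ℝ by φ(η) = √(2m²/(exp(−2mη + C) − a/2)). Then φ satisfies φ''(η) = m²·φ(η) + a·φ(η)³ + (3a²/(16m²))·φ(η)⁵ for all η ∈ I; equivalently, φ² = 2m²/(e^(−2mη+C) − a/2) is a traveling-wave solution of Eq. (18) with b = √3·a/(4m). In particular for a = 2, φ(η)² = 2m²/(e^(−2mη+C) − 1) is the Bose–Einstein distribution. -/

import Mathlib

/-- `φ = √(2m²/(e^(−2mη+C) − a/2))` solves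
`φ'' = m²φ + aφ³ + (3a²/(16m²))φ⁵` on `I = {η | e^(−2mη+C) > a/2}`, and `φ²` is the
Bose–Einstein distribution when `a = 2`. -/
theorem stmt_18 (m a C : ℝ) (hm : 0 < m) (ha : 0 < a) :
    ∀ η : ℝ, Real.exp (-(2 * m * η) + C) > a / 2 →
      deriv (deriv (fun η =>
          Real.sqrt (2 * m ^ 2 / (Real.exp (-(2 * m * η) + C) - a / 2)))) η
        = m ^ 2 * ((fun η =>
            Real.sqrt (2 * m ^ 2 / (Real.exp (-(2 * m * η) + C) - a / 2))) η)
          + a * ((fun η =>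
            Real.sqrt (2 * m ^ 2 / (Real.exp (-(2 * m * η) + C) - a / 2))) η) ^ 3
          + (3 * a ^ 2 / (16 * m ^ 2)) * ((fun η =>
            Real.sqrt (2 * m ^ 2 / (Real.exp (-(2 * m * η) + C) - a / 2))) η) ^ 5
      ∧ ((fun η =>
            Real.sqrt (2 * m ^ 2 / (Real.exp (-(2 * m * η) + C) - a / 2))) η) ^ 2
          = 2 * m ^ 2 / (Real.exp (-(2 * m * η) + C) - a / 2)
      ∧ (a = 2 → ((fun η =>
            Real.sqrt (2 * m ^ 2 / (Real.exp (-(2 * m * η) + C) - a / 2))) η) ^ 2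
          = 2 * m ^ 2 / (Real.exp (-(2 * m * η) + C) - 1)) := by
  intro η hη
  have hm' : m ≠ 0 := hm.ne'
  set E : ℝ → ℝ := fun x => Real.exp (-(2 * m * x) + C) with hEdef
  set g : ℝ → ℝ := fun x => E x - a / 2 with hgdef
  have hgη : 0 < g η := sub_pos.mpr hη
  set k : ℝ := Real.sqrt (2 * m ^ 2) with hkdef
  have hk2 : k ^ 2 = 2 * m ^ 2 := Real.sq_sqrt (by positivity)
  have hk3 : k ^ 3 = 2 * m ^ 2 * k := by
    rw [show (3 : ℕ) = 2 + 1 from rfl, pow_succ, hk2]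
  have hk5 : k ^ 5 = (2 * m ^ 2) ^ 2 * k := by
    rw [show (5 : ℕ) = 2 + 2 + 1 from rfl, pow_succ, pow_add, hk2]; ring
  have hfeq : (fun x => Real.sqrt (2 * m ^ 2 / (Real.exp (-(2 * m * x) + C) - a / 2)))
      = fun x => k / Real.sqrt (g x) := by
    funext x
    rw [Real.sqrt_div (by positivity)]
  have hEderiv : ∀ x : ℝ, HasDerivAt E (-(2 * m) * E x) x := by
    intro x
    have h1 : HasDerivAt (fun x : ℝ => -(2 * m * x) + C) (-(2 * m)) x := by
      simpa using (((hasDerivAt_id x).const_mul (2 * m)).neg.add_const C)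
    simpa [hEdef, mul_comm] using h1.exp
  have hgderiv : ∀ x : ℝ, HasDerivAt g (-(2 * m) * E x) x :=
    fun x => (hEderiv x).sub_const (a / 2)
  set f1 : ℝ → ℝ := fun x => k * m * E x / (g x * Real.sqrt (g x)) with hf1def
  have hderiv1 : ∀ x, 0 < g x → HasDerivAt (fun x => k / Real.sqrt (g x)) (f1 x) x := by
    intro x hx
    have hsx0 : 0 < Real.sqrt (g x) := Real.sqrt_pos.mpr hx
    have hsx : Real.sqrt (g x) ≠ 0 := hsx0.ne'
    have hsq : HasDerivAt (fun x => Real.sqrt (g x))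
        ((-(2 * m) * E x) / (2 * Real.sqrt (g x))) x := (hgderiv x).sqrt hx.ne'
    have h : HasDerivAt (fun x => k / Real.sqrt (g x)) _ x :=
      (hasDerivAt_const x k).div hsq hsx
    convert h using 1
    have hs2 : Real.sqrt (g x) ^ 2 = g x := Real.sq_sqrt hx.le
    show k * m * E x / (g x * Real.sqrt (g x)) = _
    set s := Real.sqrt (g x) with hsdef
    have hg' : g x = s ^ 2 := hs2.symm
    rw [hg']
    field_simp
    ring
  have hgcont : Continuous g := by
    rw [hgdef, hEdef]
    exact (((continuous_const.mul continuous_id).neg.add continuous_const).rexp).sub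
      continuous_const
  have hU : IsOpen {x | 0 < g x} := isOpen_lt continuous_const hgcont
  have hdd : deriv (fun x => k / Real.sqrt (g x)) =ᶠ[nhds η] f1 :=
    Filter.eventuallyEq_of_mem (hU.mem_nhds hgη) (fun x hx => (hderiv1 x hx).deriv)
  have hs0 : 0 < Real.sqrt (g η) := Real.sqrt_pos.mpr hgη
  have hs : Real.sqrt (g η) ≠ 0 := hs0.ne'
  have hs2 : Real.sqrt (g η) ^ 2 = g η := Real.sq_sqrt hgη.le
  have hsq : HasDerivAt (fun x => Real.sqrt (g x))
      ((-(2 * m) * E η) / (2 * Real.sqrt (g η))) η := (hgderiv η).sqrt hgη.ne'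
  have hnum : HasDerivAt (fun x => k * m * E x) (k * m * (-(2 * m) * E η)) η :=
    (hEderiv η).const_mul (k * m)
  have hden : HasDerivAt (fun x => g x * Real.sqrt (g x))
      ((-(2 * m) * E η) * Real.sqrt (g η) +
        g η * ((-(2 * m) * E η) / (2 * Real.sqrt (g η)))) η :=
    (hgderiv η).mul hsq
  have hdenne : g η * Real.sqrt (g η) ≠ 0 := by positivity
  have hf1d : HasDerivAt f1
      ((k * m * (-(2 * m) * E η) * (g η * Real.sqrt (g η)) -
        k * m * E η * ((-(2 * m) * E η) * Real.sqrt (g η) +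
          g η * ((-(2 * m) * E η) / (2 * Real.sqrt (g η))))) /
        (g η * Real.sqrt (g η)) ^ 2) η := by
    rw [hf1def]
    exact hnum.div hden hdenne
  refine ⟨?_, ?_, ?_⟩
  · rw [hfeq, Filter.EventuallyEq.deriv_eq hdd, hf1d.deriv]
    show _ = m ^ 2 * (k / Real.sqrt (g η)) + a * (k / Real.sqrt (g η)) ^ 3
      + 3 * a ^ 2 / (16 * m ^ 2) * (k / Real.sqrt (g η)) ^ 5
    have hE : E η = g η + a / 2 := by simp [hgdef]
    rw [hE, div_pow, div_pow, hk3, hk5]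
    set s := Real.sqrt (g η) with hsdef
    have hg' : g η = s ^ 2 := hs2.symm
    rw [hg']
    field_simp
    ring
  · show Real.sqrt (2 * m ^ 2 / g η) ^ 2 = 2 * m ^ 2 / g η
    exact Real.sq_sqrt (by positivity)
  · intro h2
    show Real.sqrt (2 * m ^ 2 / g η) ^ 2 = 2 * m ^ 2 / (E η - 1)
    have hg1 : g η = E η - 1 := by rw [hgdef, h2]; norm_num
    rw [Real.sq_sqrt (by positivity), hg1]
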